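/- Let T = {i_1 < ... < i_k} ⊆ [n-1] and let N_T be the multiset {1^{i_1}, 2^{i_2-i_1}, ..., (k+1)^{n-i_k}}. For any S ⊆ [n-1], the number of words w (arrangements of N_T) with connectivity set C(w) = S equals the number of permutations w ∈ S_n with C(w) = S and D(w) ⊇ [n-1]\T. -/

import Mathlib

open Finset

/-- The connectivity set of a word `w` of length `n+1` (0-based indices in `[n-1]` ≅ `Fin n`):
`i ∈ C(w)` iff `w j < w k` whenever `j ≤ i < k`. -/
def Cset {n : ℕ} {α : Type*} [LinearOrder α] (w : Fin (n+1) → α) : Finset (Fin n) :=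
  Finset.univ.filter (fun i => ∀ j k : Fin (n+1), (j : ℕ) ≤ (i : ℕ) → (i : ℕ) < (k : ℕ) → w j < w k)

/-- The descent set of a permutation of `[n]` (modelled on `Fin (n+1)`, 0-based). -/
def Dset {n : ℕ} (w : Equiv.Perm (Fin (n+1))) : Finset (Fin n) :=
  Finset.univ.filter (fun i => w i.succ < w i.castSucc)

/-- The list of gaps `i₁, i₂-i₁, …, n - i_k` determined by `S = {i₁ < … < i_k} ⊆ [n-1]`
(here the ambient set is `[n]` with `n+1` replaced appropriately: sets live in `Fin n`,
permutations act on `n+1` points). -/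
def gaps {n : ℕ} (S : Finset (Fin n)) : List ℕ :=
  let l := (S.sort (· ≤ ·)).map (fun i => (i : ℕ) + 1)
  List.zipWith (fun a b => b - a) (0 :: l) (l ++ [n+1])

/-- `η(S) = i₁!(i₂-i₁)!⋯(n-i_k)!`. -/
def eta {n : ℕ} (S : Finset (Fin n)) : ℕ := ((gaps S).map Nat.factorial).prod

/-- The number of inversions of a permutation. -/
def invNum {m : ℕ} (w : Equiv.Perm (Fin m)) : ℕ :=
  (Finset.univ.filter (fun p : Fin m × Fin m => p.1 < p.2 ∧ w p.2 < w p.1)).card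

/-- `z(T)`: sum of binomial coefficients `C(gap, 2)` over the gaps of the complement of `T`. -/
def zstat {n : ℕ} (T : Finset (Fin n)) : ℕ := ((gaps Tᶜ).map (fun a => a.choose 2)).sum

/-- The `q`-factorial `[j]!_q` in `ℤ[q]`. -/
noncomputable def qFact (j : ℕ) : Polynomial ℤ :=
  ∏ a ∈ Finset.range j, ∑ b ∈ Finset.range (a+1), Polynomial.X ^ b

/-- `η(S, q)`, the `q`-analogue of `η(S)`. -/
noncomputable def etaq {n : ℕ} (S : Finset (Fin n)) : Polynomial ℤ := ((gaps S).map qFact).prod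

/-- The letter in position `p` (0-based) of the sorted arrangement of the multiset
`N_T = {1^{i₁}, 2^{i₂-i₁}, …, (k+1)^{n-i_k}}` for `T = {i₁ < … < i_k}`. -/
def letterT (n : ℕ) (T : Finset (Fin n)) (p : Fin (n+1)) : Fin (n+2) :=
  ⟨(T.filter (fun t : Fin n => (t : ℕ) < (p : ℕ))).card + 1, by
    have h1 : (T.filter (fun t : Fin n => (t : ℕ) < (p : ℕ))).card ≤ T.card :=
      Finset.card_filter_le _ _
    have h2 : T.card ≤ n := by
      simpa using Finset.card_le_univ T
    omega⟩


section Helpers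
variable {m : ℕ}
lemma card_filter_coe_lt (c : ℕ) (hc : c ≤ m) :
    (Finset.univ.filter fun k : Fin m => (k : ℕ) < c).card = c := by
  have h : (Finset.univ.filter fun k : Fin m => (k : ℕ) < c)
      = (Finset.range c).attachFin (fun a ha => lt_of_lt_of_le (Finset.mem_range.mp ha) hc) := by
    ext a
    simp [Finset.mem_attachFin, Finset.mem_range]
  rw [h, Finset.card_attachFin, Finset.card_range]

lemma down_closed_mem_iff {B : Finset (Fin m)}
    (hB : ∀ p ∈ B, ∀ p' : Fin m, p' ≤ p → p' ∈ B) (p : Fin m) :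
    p ∈ B ↔ (p : ℕ) < B.card := by
  constructor
  · intro hp
    have h1 : (Finset.univ.filter fun k : Fin m => (k : ℕ) < (p : ℕ) + 1) ⊆ B := by
      intro k hk
      simp only [Finset.mem_filter, Finset.mem_univ, true_and] at hk
      exact hB p hp k (Fin.le_def.mpr (by omega))
    have h2 := Finset.card_le_card h1
    rw [card_filter_coe_lt ((p : ℕ) + 1) (by omega)] at h2
    omega
  · intro hp
    by_contra hnp
    have h1 : B ⊆ Finset.univ.filter fun k : Fin m => (k : ℕ) < (p : ℕ) := by
      intro k hk
      simp only [Finset.mem_filter, Finset.mem_univ, true_and]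
      by_contra h
      push_neg at h
      exact hnp (hB k hk p (Fin.le_def.mpr h))
    have h2 := Finset.card_le_card h1
    rw [card_filter_coe_lt (p : ℕ) (by omega)] at h2
    omega
end Helpers


section LetterT
variable {n : ℕ} {T : Finset (Fin n)}
lemma letterT_mono : Monotone (letterT n T) := by
  intro p q h
  simp only [letterT, Fin.mk_le_mk, Nat.add_le_add_iff_right]
  apply Finset.card_le_card
  intro t ht
  simp only [Finset.mem_filter] at ht ⊢
  exact ⟨ht.1, lt_of_lt_of_le ht.2 (Fin.le_def.mp h)⟩

lemma letterT_lt_of_mem {i : Fin n} (hi : i ∈ T) :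
    letterT n T i.castSucc < letterT n T i.succ := by
  simp only [letterT, Fin.mk_lt_mk, Fin.coe_castSucc, Fin.val_succ, Nat.add_lt_add_iff_right]
  apply Finset.card_lt_card
  constructor
  · intro t ht
    simp only [Finset.mem_filter] at ht ⊢
    exact ⟨ht.1, by omega⟩
  · intro hsub
    have hmem : i ∈ T.filter (fun t : Fin n => (t : ℕ) < (i : ℕ) + 1) := by
      simp [hi]
    have := hsub hmem
    simp at this
end LetterT

section CLemmas
variable {n : ℕ} {T : Finset (Fin n)}

lemma prefix_iff (w : Equiv.Perm (Fin (n+1))) (i : Fin n)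
    (hPw : ∀ j k : Fin (n+1), (j:ℕ) ≤ (i:ℕ) → (i:ℕ) < (k:ℕ) → w j < w k) (p : Fin (n+1)) :
    (p:ℕ) ≤ (i:ℕ) ↔ ((w p : ℕ) ≤ (i:ℕ)) := by
  set B : Finset (Fin (n+1)) :=
    (Finset.univ.filter fun q : Fin (n+1) => (q:ℕ) < (i:ℕ)+1).image ⇑w with hBdef
  have hcard : B.card = (i:ℕ)+1 := by
    rw [hBdef, Finset.card_image_of_injective _ w.injective, card_filter_coe_lt _ (by omega)]
  have hdc : ∀ v ∈ B, ∀ v' : Fin (n+1), v' ≤ v → v' ∈ B := by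
    intro v hv v' hv'
    obtain ⟨p0, hp0, rfl⟩ := Finset.mem_image.mp hv
    simp only [Finset.mem_filter, Finset.mem_univ, true_and] at hp0
    obtain ⟨p1, rfl⟩ := w.surjective v'
    by_cases h1 : (p1:ℕ) ≤ (i:ℕ)
    · have hp1 : p1 ∈ Finset.univ.filter fun q : Fin (n+1) => (q:ℕ) < (i:ℕ)+1 := by
        simp only [Finset.mem_filter, Finset.mem_univ, true_and]
        omega
      exact Finset.mem_image.mpr ⟨p1, hp1, rfl⟩
    · exfalso
      have := hPw p0 p1 (by omega) (by omega)
      exact absurd hv' (not_le.mpr this)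
  have hmem := fun v => down_closed_mem_iff hdc v
  rw [hcard] at hmem
  constructor
  · intro hp
    have hpf : p ∈ Finset.univ.filter fun q : Fin (n+1) => (q:ℕ) < (i:ℕ)+1 := by
      simp only [Finset.mem_filter, Finset.mem_univ, true_and]
      omega
    have hwp : w p ∈ B := Finset.mem_image.mpr ⟨p, hpf, rfl⟩
    have := (hmem (w p)).mp hwp
    omega
  · intro hwp
    have hmemB : w p ∈ B := (hmem (w p)).mpr (by omega)
    obtain ⟨p0, hp0, hp0e⟩ := Finset.mem_image.mp hmemB
    have hpp : p0 = p := w.injective hp0e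
    subst hpp
    simp only [Finset.mem_filter, Finset.mem_univ, true_and] at hp0
    omega

lemma Cu_of_Cw (w : Equiv.Perm (Fin (n+1)))
    (hD : ∀ i : Fin n, i ∉ T → w i.succ < w i.castSucc) (i : Fin n)
    (hPw : ∀ j k : Fin (n+1), (j:ℕ) ≤ (i:ℕ) → (i:ℕ) < (k:ℕ) → w j < w k) :
    ∀ q k : Fin (n+1), (q:ℕ) ≤ (i:ℕ) → (i:ℕ) < (k:ℕ) →
      letterT n T (w⁻¹ q) < letterT n T (w⁻¹ k) := by
  have hiT : i ∈ T := by
    by_contra hiT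
    have h1 := hD i hiT
    have h2 := hPw i.castSucc i.succ (by simp) (by simp)
    exact absurd h2 (not_lt.mpr h1.le)
  intro q k hq hk
  have hq' : ((w⁻¹ q : Fin (n+1)) : ℕ) ≤ (i:ℕ) := by
    rw [prefix_iff w i hPw (w⁻¹ q)]
    simp only [Equiv.Perm.coe_inv, Equiv.apply_symm_apply]
    omega
  have hk' : (i:ℕ) < ((w⁻¹ k : Fin (n+1)) : ℕ) := by
    by_contra hc
    push_neg at hc
    have := (prefix_iff w i hPw (w⁻¹ k)).mp hc
    simp only [Equiv.Perm.coe_inv, Equiv.apply_symm_apply] at this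
    omega
  calc letterT n T (w⁻¹ q) ≤ letterT n T i.castSucc :=
        letterT_mono (Fin.le_def.mpr (by simpa using hq'))
    _ < letterT n T i.succ := letterT_lt_of_mem hiT
    _ ≤ letterT n T (w⁻¹ k) := letterT_mono (Fin.le_def.mpr (by simp; omega))

lemma Cw_of_Cu (w : Equiv.Perm (Fin (n+1))) (i : Fin n)
    (hPu : ∀ q k : Fin (n+1), (q:ℕ) ≤ (i:ℕ) → (i:ℕ) < (k:ℕ) →
      letterT n T (w⁻¹ q) < letterT n T (w⁻¹ k)) :
    ∀ j k : Fin (n+1), (j:ℕ) ≤ (i:ℕ) → (i:ℕ) < (k:ℕ) → w j < w k := by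
  set B : Finset (Fin (n+1)) :=
    (Finset.univ.filter fun q : Fin (n+1) => (q:ℕ) < (i:ℕ)+1).image ⇑w⁻¹ with hBdef
  have hcard : B.card = (i:ℕ)+1 := by
    rw [hBdef, Finset.card_image_of_injective _ (w⁻¹).injective, card_filter_coe_lt _ (by omega)]
  have hdc : ∀ p ∈ B, ∀ p' : Fin (n+1), p' ≤ p → p' ∈ B := by
    intro p hp p' hp'
    obtain ⟨q, hq, rfl⟩ := Finset.mem_image.mp hp
    simp only [Finset.mem_filter, Finset.mem_univ, true_and] at hq
    by_cases h1 : ((w p' : Fin (n+1)) : ℕ) ≤ (i:ℕ)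
    · have hwp' : w p' ∈ Finset.univ.filter fun q : Fin (n+1) => (q:ℕ) < (i:ℕ)+1 := by
        simp only [Finset.mem_filter, Finset.mem_univ, true_and]
        omega
      exact Finset.mem_image.mpr ⟨w p', hwp', by simp⟩
    · exfalso
      have hlt := hPu q (w p') (by omega) (by omega)
      simp only [Equiv.Perm.coe_inv, Equiv.symm_apply_apply] at hlt
      exact absurd (letterT_mono (T := T) hp') (not_le.mpr hlt)
  have hmem := fun v => down_closed_mem_iff hdc v
  rw [hcard] at hmem
  intro j k hj hk
  have hjB : j ∈ B := (hmem j).mpr (by omega)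
  obtain ⟨q, hq, hqe⟩ := Finset.mem_image.mp hjB
  simp only [Finset.mem_filter, Finset.mem_univ, true_and] at hq
  have hwj : ((w j : Fin (n+1)) : ℕ) ≤ (i:ℕ) := by
    have : w j = q := by rw [← hqe]; simp
    rw [this]; omega
  have hwk : (i:ℕ) < ((w k : Fin (n+1)) : ℕ) := by
    by_contra hc
    push_neg at hc
    have hwk2 : w k ∈ Finset.univ.filter fun q : Fin (n+1) => (q:ℕ) < (i:ℕ)+1 := by
      simp only [Finset.mem_filter, Finset.mem_univ, true_and]
      omega
    have hkB : k ∈ B := Finset.mem_image.mpr ⟨w k, hwk2, by simp⟩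
    have := (hmem k).mp hkB
    omega
  exact Fin.lt_def.mpr (by omega)

end CLemmas

lemma not_mem_of_letterT_eq {n : ℕ} {T : Finset (Fin n)} {a b : Fin (n+1)} {i : Fin n}
    (h : letterT n T a = letterT n T b) (h1 : (a : ℕ) ≤ (i : ℕ)) (h2 : (i : ℕ) < (b : ℕ)) :
    i ∉ T := by
  intro hiT
  have hcard : (T.filter (fun t : Fin n => (t : ℕ) < (a : ℕ))).card
      = (T.filter (fun t : Fin n => (t : ℕ) < (b : ℕ))).card := by
    have := Fin.mk.inj_iff.mp h
    omega
  have hsub : T.filter (fun t : Fin n => (t : ℕ) < (a : ℕ))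
      ⊆ T.filter (fun t : Fin n => (t : ℕ) < (b : ℕ)) := by
    have hab : (a : ℕ) ≤ (b : ℕ) := by omega
    intro t ht
    simp only [Finset.mem_filter] at ht ⊢
    exact ⟨ht.1, by omega⟩
  have heq := Finset.eq_of_subset_of_card_le hsub (le_of_eq hcard.symm)
  have hmem : i ∈ T.filter (fun t : Fin n => (t : ℕ) < (b : ℕ)) := by
    simp [hiT, h2]
  rw [← heq] at hmem
  simp only [Finset.mem_filter] at hmem
  omega

lemma letterT_eq_of_not_mem {n : ℕ} {T : Finset (Fin n)} {i : Fin n} (hi : i ∉ T) :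
    letterT n T i.castSucc = letterT n T i.succ := by
  apply Fin.ext
  simp only [letterT, Fin.coe_castSucc, Fin.val_succ]
  congr 2
  apply Finset.filter_congr
  intro t ht
  constructor
  · omega
  · intro h
    rcases Nat.lt_or_ge (t : ℕ) (i : ℕ) with h' | h'
    · exact h'
    · exfalso
      have : t = i := Fin.ext (by omega)
      exact hi (this ▸ ht)

section Main

variable {n : ℕ} {T : Finset (Fin n)}

lemma Cset_comp_eq (T : Finset (Fin n)) (w : Equiv.Perm (Fin (n+1)))
    (hD : ∀ i : Fin n, i ∉ T → w i.succ < w i.castSucc) :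
    Cset (letterT n T ∘ ⇑w⁻¹) = Cset ⇑w := by
  ext i
  simp only [Cset, Finset.mem_filter, Finset.mem_univ, true_and, Function.comp]
  constructor
  · intro h
    exact Cw_of_Cu w i h
  · intro h
    exact Cu_of_Cw w hD i h

lemma w_block_anti (w : Equiv.Perm (Fin (n+1)))
    (hD : ∀ i : Fin n, i ∉ T → w i.succ < w i.castSucc) :
    ∀ b a : ℕ, (hb : b < n+1) → (ha : a < n+1) → a < b →
      letterT n T ⟨a, ha⟩ = letterT n T ⟨b, hb⟩ → w ⟨b, hb⟩ < w ⟨a, ha⟩ := by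
  intro b
  induction b with
  | zero => intro a _ _ h; omega
  | succ b ih =>
    intro a hb ha hab hL
    have hb' : b < n+1 := by omega
    have hbn : b < n := by omega
    have h1 : letterT n T ⟨a, ha⟩ ≤ letterT n T ⟨b, hb'⟩ :=
      letterT_mono (Fin.le_def.mpr (by simp; omega))
    have h2 : letterT n T ⟨b, hb'⟩ ≤ letterT n T ⟨b+1, hb⟩ :=
      letterT_mono (Fin.le_def.mpr (by simp))
    have hLb : letterT n T ⟨b, hb'⟩ = letterT n T ⟨b+1, hb⟩ :=
      le_antisymm h2 (hL ▸ h1)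
    have hnotT : (⟨b, hbn⟩ : Fin n) ∉ T :=
      not_mem_of_letterT_eq hLb (by simp) (by simp)
    have hstep : w ⟨b+1, hb⟩ < w ⟨b, hb'⟩ := by
      have hd := hD ⟨b, hbn⟩ hnotT
      have e1 : (⟨b, hbn⟩ : Fin n).succ = ⟨b+1, hb⟩ := Fin.ext rfl
      have e2 : (⟨b, hbn⟩ : Fin n).castSucc = ⟨b, hb'⟩ := Fin.ext rfl
      rwa [e1, e2] at hd
    rcases Nat.lt_or_ge a b with h' | h'
    · have hLab : letterT n T ⟨a, ha⟩ = letterT n T ⟨b, hb'⟩ :=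
        le_antisymm h1 ((hLb.trans hL.symm).le)
      exact lt_trans hstep (ih a hb' ha h' hLab)
    · have : a = b := by omega
      subst this
      exact hstep

lemma phiW_strictMono (w : Equiv.Perm (Fin (n+1)))
    (hD : ∀ i : Fin n, i ∉ T → w i.succ < w i.castSucc) :
    StrictMono (fun p : Fin (n+1) =>
      toLex ((letterT n T p, OrderDual.toDual (w p)) : Fin (n+2) × (Fin (n+1))ᵒᵈ)) := by
  intro p p' hpp
  rw [Prod.Lex.lt_iff]
  rcases lt_or_eq_of_le (letterT_mono (T := T) hpp.le) with h | h
  · exact Or.inl h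
  · refine Or.inr ⟨h, ?_⟩
    show OrderDual.toDual (w p) < OrderDual.toDual (w p')
    rw [OrderDual.toDual_lt_toDual]
    have := w_block_anti w hD p'.val p.val p'.isLt p.isLt (Fin.lt_def.mp hpp)
      (by simpa [Fin.eta] using h)
    simpa [Fin.eta] using this

end Main
lemma mono_eq_of_map_eq {m : ℕ} {α : Type*} [LinearOrder α] {f g : Fin m → α}
    (hf : Monotone f) (hg : Monotone g)
    (h : Multiset.map f Finset.univ.val = Multiset.map g Finset.univ.val) : f = g := by
  apply List.ofFn_injective
  refine List.Perm.eq_of_sortedLE (List.sortedLE_ofFn_iff.mpr hf)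
    (List.sortedLE_ofFn_iff.mpr hg) ?_
  rw [Fin.univ_def] at h
  simp only [Multiset.map_coe] at h
  rw [List.ofFn_eq_map, List.ofFn_eq_map]
  exact Multiset.coe_eq_coe.mp (by simpa using h)


/-- The number of arrangements `w` of the multiset `N_T` with `C(w) = S` equals the number
of permutations `w ∈ S_n` with `C(w) = S` and `D(w) ⊇ [n-1]\T`. -/
theorem stmt12 (n : ℕ) (T S : Finset (Fin n)) :
    (Finset.univ.filter (fun w : Fin (n+1) → Fin (n+2) =>
        Finset.univ.val.map w = Finset.univ.val.map (letterT n T) ∧ Cset w = S)).card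
      = (Finset.univ.filter (fun w : Equiv.Perm (Fin (n+1)) =>
          Cset ⇑w = S ∧ Tᶜ ⊆ Dset w)).card := by
  classical
  refine (Finset.card_bij (fun (w : Equiv.Perm (Fin (n+1))) (_ : w ∈ _) =>
    letterT n T ∘ ⇑w⁻¹) ?_ ?_ ?_).symm
  · -- maps into the word set
    intro w hw
    simp only [Finset.mem_filter, Finset.mem_univ, true_and] at hw ⊢
    obtain ⟨hC, hDsub⟩ := hw
    have hD : ∀ i : Fin n, i ∉ T → w i.succ < w i.castSucc := by
      intro i hi
      have hmem : i ∈ Dset w := hDsub (Finset.mem_compl.mpr hi)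
      simpa [Dset] using hmem
    constructor
    · have h2 : Multiset.map (⇑w⁻¹) Finset.univ.val = Finset.univ.val := by
        have h3 := Finset.map_univ_equiv (w⁻¹ : Equiv.Perm (Fin (n+1)))
        have h4 := congrArg Finset.val h3
        rw [Finset.map_val] at h4
        simpa using h4
      calc Finset.univ.val.map (letterT n T ∘ ⇑w⁻¹)
          = (Finset.univ.val.map (⇑w⁻¹)).map (letterT n T) := by
            rw [Multiset.map_map]
        _ = Finset.univ.val.map (letterT n T) := by rw [h2]
    · rw [Cset_comp_eq T w hD, hC]
  · -- injectivity
    intro w₁ hw₁ w₂ hw₂ h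
    simp only [Finset.mem_filter, Finset.mem_univ, true_and] at hw₁ hw₂
    have hD₁ : ∀ i : Fin n, i ∉ T → w₁ i.succ < w₁ i.castSucc := by
      intro i hi
      have hmem : i ∈ Dset w₁ := hw₁.2 (Finset.mem_compl.mpr hi)
      simpa [Dset] using hmem
    have hD₂ : ∀ i : Fin n, i ∉ T → w₂ i.succ < w₂ i.castSucc := by
      intro i hi
      have hmem : i ∈ Dset w₂ := hw₂.2 (Finset.mem_compl.mpr hi)
      simpa [Dset] using hmem
    set u : Fin (n+1) → Fin (n+2) := letterT n T ∘ ⇑w₁⁻¹ with hu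
    have hinj : Function.Injective
        (fun q : Fin (n+1) => toLex ((u q, OrderDual.toDual q) : Fin (n+2) × (Fin (n+1))ᵒᵈ)) := by
      intro a b hab
      have := congrArg (fun x => OrderDual.ofDual (ofLex x).2) hab
      simpa using this
    set s : Finset (Fin (n+2) ×ₗ (Fin (n+1))ᵒᵈ) :=
      Finset.univ.image
        (fun q : Fin (n+1) => toLex ((u q, OrderDual.toDual q) : Fin (n+2) × (Fin (n+1))ᵒᵈ))
      with hsdef
    have hs : s.card = n+1 := by
      rw [hsdef, Finset.card_image_of_injective _ hinj, Finset.card_univ, Fintype.card_fin]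
    have key : ∀ (w : Equiv.Perm (Fin (n+1))),
        (∀ i : Fin n, i ∉ T → w i.succ < w i.castSucc) →
        (letterT n T ∘ ⇑w⁻¹ = u) →
        (fun p : Fin (n+1) =>
          toLex ((letterT n T p, OrderDual.toDual (w p)) : Fin (n+2) × (Fin (n+1))ᵒᵈ))
          = ⇑(s.orderEmbOfFin hs) := by
      intro w hD hwu
      apply Finset.orderEmbOfFin_unique hs ?_ (phiW_strictMono w hD)
      intro p
      rw [hsdef]
      refine Finset.mem_image.mpr ⟨w p, Finset.mem_univ _, ?_⟩
      have : u (w p) = letterT n T p := by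
        rw [← hwu]
        simp [Function.comp]
      rw [this]
    have hkey₁ := key w₁ hD₁ rfl
    have hkey₂ := key w₂ hD₂ h.symm
    apply Equiv.ext
    intro p
    have := (hkey₁.trans hkey₂.symm)
    have hp := congrFun this p
    have := congrArg (fun x => OrderDual.ofDual (ofLex x).2) hp
    simpa using this
  · -- surjectivity
    intro u hu
    simp only [Finset.mem_filter, Finset.mem_univ, true_and] at hu
    obtain ⟨hmu, hCu⟩ := hu
    have hinj : Function.Injective
        (fun q : Fin (n+1) => toLex ((u q, OrderDual.toDual q) : Fin (n+2) × (Fin (n+1))ᵒᵈ)) := by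
      intro a b hab
      have := congrArg (fun x => OrderDual.ofDual (ofLex x).2) hab
      simpa using this
    set s : Finset (Fin (n+2) ×ₗ (Fin (n+1))ᵒᵈ) :=
      Finset.univ.image
        (fun q : Fin (n+1) => toLex ((u q, OrderDual.toDual q) : Fin (n+2) × (Fin (n+1))ᵒᵈ))
      with hsdef
    have hs : s.card = n+1 := by
      rw [hsdef, Finset.card_image_of_injective _ hinj, Finset.card_univ, Fintype.card_fin]
    set φ := s.orderEmbOfFin hs with hφ
    have hsval : s.val = Finset.univ.val.map
        (fun q : Fin (n+1) => toLex ((u q, OrderDual.toDual q) : Fin (n+2) × (Fin (n+1))ᵒᵈ)) := by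
      rw [hsdef]
      exact Finset.image_val_of_injOn hinj.injOn
    have himg : Finset.univ.image ⇑φ = s := by
      apply Finset.coe_injective
      rw [Finset.coe_image, Finset.coe_univ, Set.image_univ, hφ, Finset.range_orderEmbOfFin]
    have hφval : Finset.univ.val.map ⇑φ = s.val := by
      rw [← himg]
      exact (Finset.image_val_of_injOn φ.injective.injOn).symm
    -- the first coordinates of φ agree with letterT
    have hfstmono : Monotone (fun p : Fin (n+1) => (ofLex (φ p)).1) := by
      intro p p' hpp
      have hle : φ p ≤ φ p' := φ.monotone hpp
      have hle2 : toLex (ofLex (φ p)) ≤ toLex (ofLex (φ p')) := by simpa using hle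
      rcases Prod.Lex.le_iff.mp hle2 with h2 | h2
      · exact h2.le
      · exact h2.1.le
    have hfst : (fun p : Fin (n+1) => (ofLex (φ p)).1) = letterT n T := by
      apply mono_eq_of_map_eq hfstmono letterT_mono
      calc Multiset.map (fun p : Fin (n+1) => (ofLex (φ p)).1) Finset.univ.val
          = Multiset.map (fun x => (ofLex x).1) (Finset.univ.val.map ⇑φ) := by
            rw [Multiset.map_map]; rfl
        _ = Multiset.map (fun x => (ofLex x).1) s.val := by rw [hφval]
        _ = Multiset.map u Finset.univ.val := by
            rw [hsval, Multiset.map_map]; rfl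
        _ = Multiset.map (letterT n T) Finset.univ.val := hmu
    set g : Fin (n+1) → Fin (n+1) := fun p => OrderDual.ofDual (ofLex (φ p)).2 with hg
    have hform : ∀ p : Fin (n+1), φ p
        = toLex ((u (g p), OrderDual.toDual (g p)) : Fin (n+2) × (Fin (n+1))ᵒᵈ) := by
      intro p
      have hmem : φ p ∈ s := Finset.orderEmbOfFin_mem s hs p
      rw [hsdef] at hmem
      obtain ⟨q, _, hq⟩ := Finset.mem_image.mp hmem
      have hgq : g p = q := by
        show OrderDual.ofDual (ofLex (φ p)).2 = q
        rw [← hq]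
        rfl
      rw [hgq, ← hq]
    have hginj : Function.Injective g := by
      intro p p' hpp
      apply φ.injective
      rw [hform p, hform p', hpp]
    have hgbij : Function.Bijective g := Finite.injective_iff_bijective.mp hginj
    refine ⟨Equiv.ofBijective g hgbij, ?_, ?_⟩
    · -- membership in the permutation set
      have hwcoe : ⇑(Equiv.ofBijective g hgbij) = g := rfl
      have hlu : ∀ p : Fin (n+1), letterT n T p = u (g p) := by
        intro p
        have h1 : (ofLex (φ p)).1 = u (g p) := by rw [hform p]; rfl
        rw [← h1, ← hfst]
      have hD : ∀ i : Fin n, i ∉ T →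
          (Equiv.ofBijective g hgbij) i.succ < (Equiv.ofBijective g hgbij) i.castSucc := by
        intro i hi
        have hlt : φ i.castSucc < φ i.succ := φ.strictMono Fin.castSucc_lt_succ
        have hlt2 : toLex (ofLex (φ i.castSucc)) < toLex (ofLex (φ i.succ)) := by simpa using hlt
        rcases Prod.Lex.lt_iff.mp hlt with h2 | h2
        · exfalso
          have e1 : (ofLex (φ i.castSucc)).1 = letterT n T i.castSucc := by rw [← hfst]
          have e2 : (ofLex (φ i.succ)).1 = letterT n T i.succ := by rw [← hfst]
          rw [e1, e2, letterT_eq_of_not_mem hi] at h2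
          exact lt_irrefl _ h2
        · have h3 : (ofLex (φ i.castSucc)).2 < (ofLex (φ i.succ)).2 := h2.2
          have e3 : (ofLex (φ i.castSucc)).2 = OrderDual.toDual (g i.castSucc) := by
            rw [hform]; rfl
          have e4 : (ofLex (φ i.succ)).2 = OrderDual.toDual (g i.succ) := by
            rw [hform]; rfl
          rw [e3, e4, OrderDual.toDual_lt_toDual] at h3
          exact h3
      have hU : letterT n T ∘ ⇑(Equiv.ofBijective g hgbij)⁻¹ = u := by
        funext q
        have h1 : letterT n T ((Equiv.ofBijective g hgbij)⁻¹ q)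
            = u (g ((Equiv.ofBijective g hgbij)⁻¹ q)) := hlu _
        have h2 : g ((Equiv.ofBijective g hgbij)⁻¹ q) = q :=
          Equiv.apply_symm_apply (Equiv.ofBijective g hgbij) q
        simp only [Function.comp]
        rw [h1, h2]
      simp only [Finset.mem_filter, Finset.mem_univ, true_and]
      constructor
      · rw [← Cset_comp_eq T (Equiv.ofBijective g hgbij) hD, hU, hCu]
      · intro i hi
        simp only [Dset, Finset.mem_filter, Finset.mem_univ, true_and]
        exact hD i (Finset.mem_compl.mp hi)
    · -- the map sends it to u
      have hwcoe : ⇑(Equiv.ofBijective g hgbij) = g := rfl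
      funext q
      have h1 : letterT n T ((Equiv.ofBijective g hgbij)⁻¹ q)
          = u (g ((Equiv.ofBijective g hgbij)⁻¹ q)) := by
        have h2 : (ofLex (φ ((Equiv.ofBijective g hgbij)⁻¹ q))).1
            = u (g ((Equiv.ofBijective g hgbij)⁻¹ q)) := by rw [hform]; rfl
        rw [← h2, ← hfst]
      have h2 : g ((Equiv.ofBijective g hgbij)⁻¹ q) = q :=
        Equiv.apply_symm_apply (Equiv.ofBijective g hgbij) q
      simp only [Function.comp]
      rw [h1, h2]
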